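/- arXiv:1707.04907 — 2 statements merged into one kernel-verified Lean document; each statement's English description precedes it below -/
import Mathlib

section
/- (Laplace's method.) Let a < b be reals and f : [a,b] → ℝ be twice continuously differentiable on [a,b]. Suppose x₀ ∈ (a,b) satisfies f(x) < f(x₀) for all x ∈ [a,b] with x ≠ x₀, and f''(x₀) < 0. Then ∫_a^b e^{n·f(x)} dx ∼ e^{n·f(x₀)}·√(2π/(−n·f''(x₀))) as n → ∞, i.e. the ratio of the two sides tends to 1 as the positive integer n tends to infinity. -/
open Real Filter
open Set MeasureTheory Topology


lemma taylor_quad {f : ℝ → ℝ} {s : Set ℝ} (hs : IsOpen s) (hf : ContDiffOn ℝ 2 f s)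
    {x₀ : ℝ} (hx : x₀ ∈ s) (h1 : deriv f x₀ = 0) {ε : ℝ} (hε : 0 < ε) :
    ∃ δ > 0, Metric.closedBall x₀ δ ⊆ s ∧ ∀ u, |u - x₀| ≤ δ →
      |f u - f x₀ - deriv (deriv f) x₀ * (u - x₀)^2 / 2| ≤ ε * (u - x₀)^2 := by
  set Q := deriv (deriv f) x₀ with hQ
  have h2 : ContDiffOn ℝ 1 (deriv f) s := hf.deriv_of_isOpen hs (by norm_num)
  have hdf : DifferentiableOn ℝ f s := hf.differentiableOn (by norm_num)
  have hddf : DifferentiableOn ℝ (deriv f) s := h2.differentiableOn (by norm_num)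
  have hcont : ContinuousOn (deriv (deriv f)) s :=
    h2.continuousOn_deriv_of_isOpen hs le_rfl
  have hca : ContinuousAt (deriv (deriv f)) x₀ :=
    hcont.continuousAt (hs.mem_nhds hx)
  obtain ⟨δ₀, hδ₀, hball⟩ := Metric.continuousAt_iff.1 hca (ε/2) (by positivity)
  obtain ⟨δ₁, hδ₁, hsub⟩ := Metric.isOpen_iff.1 hs x₀ hx
  set δ := min (δ₀/2) (δ₁/2) with hδdef
  have hδpos : 0 < δ := by positivity
  have hcb : Metric.closedBall x₀ δ ⊆ s := by
    intro y hy
    apply hsub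
    simp only [Metric.mem_closedBall] at hy
    simp only [Metric.mem_ball]
    calc dist y x₀ ≤ δ := hy
    _ < δ₁ := by simp [hδdef]; right; linarith
  refine ⟨δ, hδpos, hcb, ?_⟩
  intro u hu
  set B := Metric.closedBall x₀ δ with hB
  have hconv : Convex ℝ B := convex_closedBall x₀ δ
  have huB : u ∈ B := by rw [hB]; simpa [Real.dist_eq] using hu
  have hx₀B : x₀ ∈ B := Metric.mem_closedBall_self hδpos.le
  -- step 1: bound on deriv f
  have step1 : ∀ v ∈ B, |deriv f v - Q * (v - x₀)| ≤ (ε/2) * |v - x₀| := by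
    intro v hv
    have key := hconv.norm_image_sub_le_of_norm_hasDerivWithin_le (C := ε/2)
      (f := fun w => deriv f w - Q * w) (f' := fun w => deriv (deriv f) w - Q)
      (fun w hw => by
        simpa using ((((hddf w (hcb hw)).differentiableAt
          (hs.mem_nhds (hcb hw))).hasDerivAt.fun_sub
          ((hasDerivAt_id w).const_mul Q)).hasDerivWithinAt (s := B)))
      (fun w hw => ?_) hx₀B hv
    · have : deriv f v - Q * v - (deriv f x₀ - Q * x₀) = deriv f v - Q * (v - x₀) := by
        rw [h1]; ring
      rw [this] at key
      simpa [Real.norm_eq_abs, abs_sub_comm x₀ v] using key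
    · have hwd : dist w x₀ ≤ δ := hw
      have : dist (deriv (deriv f) w) (deriv (deriv f) x₀) < ε/2 := by
        apply hball
        calc dist w x₀ ≤ δ := hwd
        _ < δ₀ := by simp [hδdef]; left; linarith
      simp only [Real.dist_eq] at this
      simp only [Real.norm_eq_abs, mul_one]
      exact (le_of_lt this)
  -- step 2
  have hseg : Set.uIcc x₀ u ⊆ B := hconv.ordConnected.uIcc_subset hx₀B huB
  have key2 := (convex_uIcc x₀ u).norm_image_sub_le_of_norm_hasDerivWithin_le
    (f := fun w => f w - Q * (w - x₀)^2 / 2) (f' := fun w => deriv f w - Q * (w - x₀))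
    (fun w hw => ?_) (C := (ε/2) * |u - x₀|) (fun w hw => ?_) Set.left_mem_uIcc Set.right_mem_uIcc
  · have : f u - Q * (u - x₀)^2/2 - (f x₀ - Q * (x₀ - x₀)^2/2)
        = f u - f x₀ - Q * (u - x₀)^2 / 2 := by ring
    rw [this] at key2
    simp only [Real.norm_eq_abs] at key2
    calc |f u - f x₀ - Q * (u - x₀)^2 / 2| ≤ ε/2 * |u - x₀| * |u - x₀| := key2
    _ = ε/2 * (u-x₀)^2 := by rw [mul_assoc, ← abs_mul, ← sq, abs_sq]
    _ ≤ ε * (u - x₀)^2 := by nlinarith [sq_nonneg (u - x₀)]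
  · have hwB := hseg hw
    have h1' : HasDerivAt (fun w => f w) (deriv f w) w :=
      ((hdf w (hcb hwB)).differentiableAt (hs.mem_nhds (hcb hwB))).hasDerivAt
    have h2' : HasDerivAt (fun w => Q * (w - x₀)^2 / 2) (Q * (w - x₀)) w := by
      have : HasDerivAt (fun w : ℝ => (w - x₀)^2) (2 * (w - x₀)) w := by
        simpa using ((hasDerivAt_id w).sub_const x₀).fun_pow 2
      have := (this.const_mul Q).div_const 2
      exact this.congr_deriv (by ring)
    exact (h1'.sub h2').hasDerivWithinAt
  · simp only [Real.norm_eq_abs]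
    calc |deriv f w - Q * (w - x₀)| ≤ ε/2 * |w - x₀| := step1 w (hseg hw)
    _ ≤ ε/2 * |u - x₀| := by
        have := Set.abs_sub_left_of_mem_uIcc hw
        nlinarith


set_option maxHeartbeats 2000000 in
theorem stmt_3 (a b : ℝ) (hab : a < b) (f : ℝ → ℝ)
    (hf : ContDiffOn ℝ 2 f (Set.Icc a b))
    (x₀ : ℝ) (hx₀ : x₀ ∈ Set.Ioo a b)
    (hmax : ∀ x ∈ Set.Icc a b, x ≠ x₀ → f x < f x₀)
    (hf'' : deriv (deriv f) x₀ < 0) :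
    Tendsto (fun n : ℕ => (∫ x in a..b, Real.exp (n * f x)) /
      (Real.exp (n * f x₀) * Real.sqrt (2 * π / (-(n * deriv (deriv f) x₀)))))
      atTop (nhds 1) := by
  obtain ⟨ha, hb⟩ := hx₀
  have hx₀' : x₀ ∈ Set.Ioo a b := ⟨ha, hb⟩
  set Q := deriv (deriv f) x₀ with hQdef
  set c := -Q with hcdef
  have hc : 0 < c := by simp only [hcdef]; linarith
  have hfo : ContDiffOn ℝ 2 f (Set.Ioo a b) := hf.mono Set.Ioo_subset_Icc_self
  have hderiv0 : deriv f x₀ = 0 := by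
    have hd : DifferentiableAt ℝ f x₀ :=
      ((hfo.differentiableOn (by norm_num)) x₀ hx₀').differentiableAt
        (isOpen_Ioo.mem_nhds hx₀')
    refine IsLocalMax.deriv_eq_zero ?_
    filter_upwards [Icc_mem_nhds ha hb] with y hy
    by_cases hyx : y = x₀
    · simp [hyx]
    · exact (hmax y hy hyx).le
  obtain ⟨δ, hδpos, hδsub, hδtay⟩ := taylor_quad isOpen_Ioo hfo hx₀' hderiv0
    (ε := c/4) (by positivity)
  -- quadratic upper bound near x₀
  have P1 : ∀ u : ℝ, |u - x₀| ≤ δ → f u - f x₀ ≤ -(c/4) * (u - x₀)^2 := by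
    intro u hu
    have h := (abs_le.1 (hδtay u hu)).2
    have : Q = -c := by simp [hcdef]
    nlinarith [sq_nonneg (u - x₀)]
  -- away from x₀
  have hxδa : a < x₀ - δ := by
    have hmem' : x₀ - δ ∈ Metric.closedBall x₀ δ := by
      simp only [Metric.mem_closedBall, Real.dist_eq]
      rw [abs_le]; constructor <;> linarith
    exact (hδsub hmem').1
  have hxδb : x₀ + δ < b := by
    have hmem' : x₀ + δ ∈ Metric.closedBall x₀ δ := by
      simp only [Metric.mem_closedBall, Real.dist_eq]
      rw [abs_le]; constructor <;> linarith
    exact (hδsub hmem').2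
  have haK : a ∈ Set.Icc a b \ Metric.ball x₀ δ := by
    constructor
    · exact ⟨le_refl a, hab.le⟩
    · simp only [Metric.mem_ball, Real.dist_eq, not_lt]
      rw [abs_of_nonpos (by linarith)]
      linarith
  obtain ⟨z, hzK, hzmax⟩ := ((isCompact_Icc).diff Metric.isOpen_ball).exists_isMaxOn
    ⟨a, haK⟩ (hf.continuousOn.mono Set.diff_subset)
  set ε₀ := f x₀ - f z with hε₀def
  have hε₀ : 0 < ε₀ := by
    have hz : z ≠ x₀ := by
      intro h
      have := hzK.2
      rw [h] at this
      exact this (Metric.mem_ball_self hδpos)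
    have := hmax z hzK.1 hz
    simp only [hε₀def]; linarith
  have P2 : ∀ x ∈ Set.Icc a b, δ ≤ |x - x₀| → f x - f x₀ ≤ -ε₀ := by
    intro x hx hd
    have hxK : x ∈ Set.Icc a b \ Metric.ball x₀ δ := by
      refine ⟨hx, ?_⟩
      simp only [Metric.mem_ball, Real.dist_eq, not_lt]
      exact hd
    have hfx : f x ≤ f z := hzmax hxK
    simp only [hε₀def]
    linarith
  set K' := max (b - x₀) (x₀ - a) with hK'def
  have hK' : 0 < K' := lt_max_of_lt_left (by linarith)
  set m := min (c/4) (ε₀ / K'^2) with hmdef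
  have hm : 0 < m := lt_min (by positivity) (by positivity)
  -- membership
  have hmem : ∀ n : ℕ, ∀ t ∈ Set.Ioc (√(n:ℝ) * (a - x₀)) (√(n:ℝ) * (b - x₀)),
      0 < √(n:ℝ) ∧ t / √(n:ℝ) + x₀ ∈ Set.Icc a b := by
    intro n t ht
    have hsn : 0 < √(n:ℝ) := by
      rcases lt_or_ge 0 (√(n:ℝ)) with h | h
      · exact h
      · exfalso
        have h0 : √(n:ℝ) = 0 := le_antisymm h (Real.sqrt_nonneg _)
        rw [h0] at ht
        exact absurd ht (by simp)
    refine ⟨hsn, ?_⟩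
    constructor
    · have := ht.1
      rw [div_add' _ _ _ hsn.ne', le_div_iff₀ hsn]
      nlinarith
    · have := ht.2
      rw [div_add' _ _ _ hsn.ne', div_le_iff₀ hsn]
      nlinarith
  -- key bound
  have hbound : ∀ n : ℕ, ∀ t ∈ Set.Ioc (√(n:ℝ) * (a - x₀)) (√(n:ℝ) * (b - x₀)),
      (n:ℝ) * (f (t / √(n:ℝ) + x₀) - f x₀) ≤ -m * t^2 := by
    intro n t ht
    obtain ⟨hsn, hxmem⟩ := hmem n t ht
    set s := t / √(n:ℝ) with hsdef
    have hts : t = √(n:ℝ) * s := by rw [hsdef]; field_simp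
    have hnsq : (√(n:ℝ))^2 = (n:ℝ) := Real.sq_sqrt (Nat.cast_nonneg n)
    have habs : |s + x₀ - x₀| = |s| := by ring_nf
    have hsx : s + x₀ = t / √(n:ℝ) + x₀ := by rw [hsdef]
    rw [← hsx]
    rcases le_or_gt |s| δ with h | h
    · have h2 : f (s + x₀) - f x₀ ≤ -(c/4) * s^2 := by
        have := P1 (s + x₀) (by rwa [habs])
        simpa using this
      have hm4 : m ≤ c/4 := min_le_left _ _
      have ht2 : t^2 = (n:ℝ) * s^2 := by rw [hts, mul_pow, hnsq]
      have h3 : (n:ℝ) * (f (s+x₀) - f x₀) ≤ (n:ℝ) * (-(c/4) * s^2) :=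
        mul_le_mul_of_nonneg_left h2 (Nat.cast_nonneg n)
      have h4 : (n:ℝ) * (-(c/4)*s^2) = -(c/4) * t^2 := by rw [ht2]; ring
      have h5 : -(c/4) * t^2 ≤ -m * t^2 := by nlinarith [sq_nonneg t]
      linarith
    · have hP2 := P2 (s + x₀) hxmem (by rw [habs]; exact h.le)
      have hKb : b - x₀ ≤ K' := le_max_left _ _
      have hKa : x₀ - a ≤ K' := le_max_right _ _
      have htb : t ≤ √(n:ℝ) * K' :=
        le_trans ht.2 (mul_le_mul_of_nonneg_left hKb hsn.le)
      have hta : -(√(n:ℝ) * K') ≤ t := by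
        have h1' : √(n:ℝ) * (a - x₀) ≤ t := ht.1.le
        nlinarith
      have ht2 : t^2 ≤ (n:ℝ) * K'^2 := by
        have := sq_le_sq' hta htb
        rwa [mul_pow, hnsq] at this
      have hmε : m ≤ ε₀ / K'^2 := min_le_right _ _
      have h3 : (n:ℝ) * (f (s+x₀) - f x₀) ≤ (n:ℝ) * (-ε₀) :=
        mul_le_mul_of_nonneg_left hP2 (Nat.cast_nonneg n)
      have h4 : m * t^2 ≤ ε₀ / K'^2 * t^2 :=
        mul_le_mul_of_nonneg_right hmε (sq_nonneg t)
      have h5 : ε₀ / K'^2 * t^2 ≤ ε₀ / K'^2 * ((n:ℝ) * K'^2) :=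
        mul_le_mul_of_nonneg_left ht2 (by positivity)
      have h6 : ε₀ / K'^2 * ((n:ℝ) * K'^2) = (n:ℝ) * ε₀ := by
        field_simp
      calc (n:ℝ) * (f (s + x₀) - f x₀) ≤ (n:ℝ) * (-ε₀) := h3
      _ = -((n:ℝ) * ε₀) := by ring
      _ ≤ -(m * t^2) := neg_le_neg (le_trans h4 (le_of_le_of_eq h5 h6))
      _ = -m * t^2 := by ring
  -- sqrt tends to infinity
  have hsq : Tendsto (fun n : ℕ => √(n:ℝ)) atTop atTop := by
    refine tendsto_atTop.2 fun C => ?_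
    filter_upwards [eventually_ge_atTop (⌈C^2⌉₊)] with n hn
    have h1 : (C^2 : ℝ) ≤ (n : ℝ) := le_trans (Nat.le_ceil _) (Nat.cast_le.2 hn)
    calc C ≤ |C| := le_abs_self C
    _ = √(C^2) := (Real.sqrt_sq_eq_abs C).symm
    _ ≤ √(n:ℝ) := Real.sqrt_le_sqrt h1
  set F : ℕ → ℝ → ℝ := fun n t =>
    (Set.Ioc (√(n:ℝ) * (a - x₀)) (√(n:ℝ) * (b - x₀))).indicator
      (fun t => Real.exp (n * (f (t / √(n:ℝ) + x₀) - f x₀))) t with hFdef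
  have hFmeas : ∀ n : ℕ, AEStronglyMeasurable (F n) volume := by
    intro n
    refine (aestronglyMeasurable_indicator_iff measurableSet_Ioc).2 ?_
    refine ContinuousOn.aestronglyMeasurable ?_ measurableSet_Ioc
    refine Real.continuous_exp.comp_continuousOn ?_
    refine ContinuousOn.mul continuousOn_const (ContinuousOn.sub ?_ continuousOn_const)
    refine hf.continuousOn.comp (((continuous_id.div_const _).add continuous_const).continuousOn) ?_
    intro t ht
    exact (hmem n t ht).2
  have hFdom : ∀ n : ℕ, ∀ᵐ t : ℝ, ‖F n t‖ ≤ Real.exp (-m * t^2) := by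
    intro n
    refine ae_of_all _ fun t => ?_
    by_cases ht : t ∈ Set.Ioc (√(n:ℝ) * (a - x₀)) (√(n:ℝ) * (b - x₀))
    · rw [hFdef]
      simp only [Set.indicator_of_mem ht]
      rw [Real.norm_eq_abs, abs_of_nonneg (Real.exp_pos _).le]
      exact Real.exp_le_exp.2 (hbound n t ht)
    · rw [hFdef]
      simp only [Set.indicator_of_notMem ht, norm_zero]
      exact (Real.exp_pos _).le
  have hFlim : ∀ t : ℝ, Tendsto (fun n : ℕ => F n t) atTop (𝓝 (Real.exp (-(c/2) * t^2))) := by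
    intro t
    have hmemEv : ∀ᶠ n : ℕ in atTop,
        t ∈ Set.Ioc (√(n:ℝ) * (a - x₀)) (√(n:ℝ) * (b - x₀)) := by
      have h1 : Tendsto (fun n : ℕ => √(n:ℝ) * (a - x₀)) atTop atBot :=
        hsq.atTop_mul_const_of_neg' (by linarith)
      have h2 : Tendsto (fun n : ℕ => √(n:ℝ) * (b - x₀)) atTop atTop :=
        hsq.atTop_mul_const' (by linarith)
      filter_upwards [h1.eventually_lt_atBot t, h2.eventually_ge_atTop t] with n hn1 hn2
      exact ⟨hn1, hn2⟩
    have hinner : Tendsto (fun n : ℕ => (n:ℝ) * (f (t / √(n:ℝ) + x₀) - f x₀)) atTop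
        (𝓝 (-(c/2) * t^2)) := by
      rw [Metric.tendsto_atTop]
      intro ε hεpos
      set ε' := ε / (t^2 + 1) with hε'def
      have hε' : 0 < ε' := by positivity
      obtain ⟨δ', hδ'pos, hδ'sub, hδ'tay⟩ := taylor_quad isOpen_Ioo hfo hx₀' hderiv0 hε'
      have hto0 : Tendsto (fun n : ℕ => t / √(n:ℝ)) atTop (𝓝 0) := by
        have := hsq.inv_tendsto_atTop
        have h2 := this.const_mul t
        simp only [mul_zero] at h2
        refine h2.congr fun n => ?_
        rw [Pi.inv_apply, div_eq_mul_inv]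
      have hev : ∀ᶠ n : ℕ in atTop, |t / √(n:ℝ)| ≤ δ' ∧ 1 ≤ n := by
        have h3 := Metric.tendsto_nhds.1 hto0 δ' hδ'pos
        filter_upwards [h3, eventually_ge_atTop 1] with n hn1 hn2
        rw [Real.dist_eq, sub_zero] at hn1
        exact ⟨hn1.le, hn2⟩
      obtain ⟨N, hN⟩ := eventually_atTop.1 hev
      refine ⟨N, fun n hn => ?_⟩
      obtain ⟨habs', hn1⟩ := hN n hn
      have hn0 : (0:ℝ) < n := by exact_mod_cast hn1
      have hsn : 0 < √(n:ℝ) := Real.sqrt_pos.2 hn0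
      set s := t / √(n:ℝ) with hsdef
      have hns2 : (n:ℝ) * s^2 = t^2 := by
        rw [hsdef, div_pow, Real.sq_sqrt hn0.le]
        field_simp
      have htay := hδ'tay (s + x₀) (by simpa using habs')
      have e1 : (s + x₀ - x₀) = s := by ring
      rw [e1] at htay
      have h1 : |(n:ℝ) * (f (s + x₀) - f x₀ - Q * s^2/2)| ≤ (n:ℝ) * (ε' * s^2) := by
        rw [abs_mul, Nat.abs_cast]
        exact mul_le_mul_of_nonneg_left htay (Nat.cast_nonneg n)
      have e2 : (n:ℝ) * (f (s + x₀) - f x₀ - Q * s^2/2) =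
          (n:ℝ) * (f (s + x₀) - f x₀) - (-(c/2)*t^2) := by
        have hQc : Q = -c := by simp [hcdef]
        rw [hQc, ← hns2]; ring
      have e3 : (n:ℝ) * (ε' * s^2) = ε' * t^2 := by rw [← hns2]; ring
      rw [e2, e3] at h1
      rw [Real.dist_eq]
      have hxe : t / √(n:ℝ) + x₀ = s + x₀ := by rw [hsdef]
      rw [hxe]
      calc |(n:ℝ) * (f (s + x₀) - f x₀) - (-(c/2)*t^2)| ≤ ε' * t^2 := h1
      _ < ε := by
          rw [hε'def, div_mul_eq_mul_div, div_lt_iff₀ (by positivity)]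
          nlinarith [sq_nonneg t]
    refine Tendsto.congr' ?_ ((Real.continuous_exp.tendsto _).comp hinner)
    filter_upwards [hmemEv] with n hn
    simp only [hFdef, Function.comp_apply, Set.indicator_of_mem hn]
  have hdct : Tendsto (fun n : ℕ => ∫ t : ℝ, F n t) atTop (𝓝 (√(π / (c/2)))) := by
    have hD := MeasureTheory.tendsto_integral_of_dominated_convergence
      (F := F) (f := fun t => Real.exp (-(c/2) * t^2)) (bound := fun t => Real.exp (-m * t^2))
      hFmeas (integrable_exp_neg_mul_sq hm) hFdom (MeasureTheory.ae_of_all _ hFlim)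
    rwa [integral_gaussian (c/2)] at hD
  have hchg : ∀ n : ℕ, 1 ≤ n → (∫ t : ℝ, F n t) =
      √(n:ℝ) * ∫ x in a..b, Real.exp (n * (f x - f x₀)) := by
    intro n hn
    have hn0 : (0:ℝ) < n := by exact_mod_cast hn
    have hsn : 0 < √(n:ℝ) := Real.sqrt_pos.2 hn0
    rw [hFdef]
    rw [MeasureTheory.integral_indicator measurableSet_Ioc]
    rw [← intervalIntegral.integral_of_le
      (by nlinarith : √(n:ℝ)*(a-x₀) ≤ √(n:ℝ)*(b-x₀))]
    rw [intervalIntegral.integral_comp_div_add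
      (fun x => Real.exp (n * (f x - f x₀))) hsn.ne' x₀]
    have e1 : √(n:ℝ)*(a-x₀)/√(n:ℝ) + x₀ = a := by field_simp; ring
    have e2 : √(n:ℝ)*(b-x₀)/√(n:ℝ) + x₀ = b := by field_simp; ring
    rw [e1, e2, smul_eq_mul]
  have h2πc : 0 < 2*π/c := by positivity
  have hne : √(2*π/c) ≠ 0 := (Real.sqrt_pos.2 h2πc).ne'
  have hfin : ∀ᶠ n : ℕ in atTop, (∫ x in a..b, Real.exp (n * f x)) /
      (Real.exp (n * f x₀) * Real.sqrt (2 * π / (-(n * Q)))) =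
      (∫ t : ℝ, F n t) / √(2*π/c) := by
    filter_upwards [eventually_ge_atTop 1] with n hn
    have hn0 : (0:ℝ) < n := by exact_mod_cast hn
    have hsn : 0 < √(n:ℝ) := Real.sqrt_pos.2 hn0
    have hsplit : (∫ x in a..b, Real.exp (n * f x)) =
        Real.exp (n * f x₀) * ∫ x in a..b, Real.exp (n * (f x - f x₀)) := by
      rw [← intervalIntegral.integral_const_mul]
      refine intervalIntegral.integral_congr fun x hx => ?_
      rw [← Real.exp_add]
      ring_nf
    have hsqrt : Real.sqrt (2*π/(-(n*Q))) = √(2*π/c) / √(n:ℝ) := by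
      have hQc : -((n:ℝ)*Q) = (n:ℝ) * c := by rw [hcdef]; ring
      rw [hQc, show 2*π/((n:ℝ)*c) = (2*π/c)/(n:ℝ) by rw [div_div]; ring_nf]
      exact Real.sqrt_div h2πc.le (n:ℝ)
    rw [hsplit, hsqrt, hchg n hn]
    rw [div_eq_div_iff (by positivity) (by positivity)]
    field_simp
  have hlim2 : Tendsto (fun n : ℕ => (∫ t : ℝ, F n t) / √(2*π/c)) atTop (𝓝 1) := by
    have hD := hdct.div_const (√(2*π/c))
    have heq : √(π/(c/2)) / √(2*π/c) = 1 := by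
      rw [show π/(c/2) = 2*π/c by rw [div_div_eq_mul_div]; ring_nf]
      exact div_self hne
    rwa [heq] at hD
  exact hlim2.congr' (Filter.EventuallyEq.symm hfin)
end

section
/- Let h be a positive integer and δ = (δ₁,…,δ_h) ∈ {1,−1}^h. Let |δ|₁ and |δ|₋₁ denote the number of entries of δ equal to 1 and to −1 respectively. Then h + ∑_{1≤i<j≤h, δ_i>δ_j} (j−i) + ∑_{1≤i<j≤h, δ_i<δ_j} (h+i−j) = h·(1 + |δ|₁·|δ|₋₁/2). Equivalently, writing W_δ for the multiset consisting of h together with j−i for each pair i<j with δ_i>δ_j and h+i−j for each pair i<j with δ_i<δ_j, one has ∑_{t∈W_δ}(t/(2h) − 1/4) = 1/4, since W_δ has cardinality 1 + |δ|₁·|δ|₋₁. -/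
open Real

set_option maxHeartbeats 1000000 in
theorem stmt_11 (h : ℕ) (hh : 0 < h) (δ : ℕ → ℤ)
    (hδ : ∀ i, 1 ≤ i → i ≤ h → δ i = 1 ∨ δ i = -1)
    (a₁ a₂ : ℕ)
    (ha₁ : a₁ = ((Finset.Icc 1 h).filter (fun i => δ i = 1)).card)
    (ha₂ : a₂ = ((Finset.Icc 1 h).filter (fun i => δ i = -1)).card) :
    ((h : ℝ) +
      (∑ p ∈ ((Finset.Icc 1 h) ×ˢ (Finset.Icc 1 h)).filter
        (fun p => p.1 < p.2 ∧ δ p.2 < δ p.1), ((p.2 : ℝ) - (p.1 : ℝ))) +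
      (∑ p ∈ ((Finset.Icc 1 h) ×ˢ (Finset.Icc 1 h)).filter
        (fun p => p.1 < p.2 ∧ δ p.1 < δ p.2), ((h : ℝ) + (p.1 : ℝ) - (p.2 : ℝ))) =
      (h : ℝ) * (1 + (a₁ : ℝ) * (a₂ : ℝ) / 2)) ∧
    (((h : ℝ) / (2 * h) - 1 / 4) +
      (∑ p ∈ ((Finset.Icc 1 h) ×ˢ (Finset.Icc 1 h)).filter
        (fun p => p.1 < p.2 ∧ δ p.2 < δ p.1), (((p.2 : ℝ) - (p.1 : ℝ)) / (2 * h) - 1 / 4)) +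
      (∑ p ∈ ((Finset.Icc 1 h) ×ˢ (Finset.Icc 1 h)).filter
        (fun p => p.1 < p.2 ∧ δ p.1 < δ p.2),
        (((h : ℝ) + (p.1 : ℝ) - (p.2 : ℝ)) / (2 * h) - 1 / 4)) = 1 / 4) ∧
    (1 + (((Finset.Icc 1 h) ×ˢ (Finset.Icc 1 h)).filter
        (fun p => p.1 < p.2 ∧ δ p.2 < δ p.1)).card +
      (((Finset.Icc 1 h) ×ˢ (Finset.Icc 1 h)).filter
        (fun p => p.1 < p.2 ∧ δ p.1 < δ p.2)).card = 1 + a₁ * a₂) := by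
  classical
  set I : Finset ℕ := Finset.Icc 1 h with hI
  set s : ℕ → ℝ := fun i => (δ i : ℝ) with hsdef
  have hmem : ∀ i ∈ I, 1 ≤ i ∧ i ≤ h := by
    intro i hi; simpa [hI, Finset.mem_Icc] using hi
  have hδ' : ∀ i ∈ I, δ i = 1 ∨ δ i = -1 := fun i hi => hδ i (hmem i hi).1 (hmem i hi).2
  have hs2 : ∀ i ∈ I, s i * s i = 1 := by
    intro i hi; rcases hδ' i hi with e | e <;> simp [hsdef, e]
  have hcardI : I.card = h := by simp [hI]
  -- Gauss sum
  have gauss : ∀ n : ℕ, ∑ j ∈ Finset.Icc 1 n, (j:ℝ) = n*(n+1)/2 := by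
    intro n
    induction n with
    | zero => simp
    | succ n ih => rw [Finset.sum_Icc_succ_top (by omega : 1 ≤ n+1), ih]; push_cast; ring
  -- filter descriptions
  have hfilter_gt : ∀ i : ℕ, I.filter (fun j => i < j) = Finset.Ioc i h := by
    intro i; ext j; simp only [hI, Finset.mem_filter, Finset.mem_Icc, Finset.mem_Ioc]; omega
  have hfilter_lt : ∀ j ∈ I, I.filter (fun i => i < j) = Finset.Ico 1 j := by
    intro j hj; have := hmem j hj
    ext i; simp only [hI, Finset.mem_filter, Finset.mem_Icc, Finset.mem_Ico]; omega
  have ite_gt : ∀ (f : ℕ → ℝ) (i : ℕ),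
      ∑ j ∈ I, (if i < j then f j else 0) = ∑ j ∈ Finset.Ioc i h, f j := by
    intro f i; rw [← Finset.sum_filter, hfilter_gt]
  have ite_lt : ∀ (f : ℕ → ℝ), ∀ j ∈ I,
      ∑ i ∈ I, (if i < j then f i else 0) = ∑ i ∈ Finset.Ico 1 j, f i := by
    intro f j hj; rw [← Finset.sum_filter, hfilter_lt j hj]
  -- sums over Ioc / Ico
  have hIoc : ∀ i, i ≤ h → Finset.Ioc i h = Finset.Icc 1 h \ Finset.Icc 1 i := by
    intro i hi; ext j
    simp only [Finset.mem_Ioc, Finset.mem_sdiff, Finset.mem_Icc]; omega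
  have sum_Ioc_id : ∀ i, i ≤ h → ∑ j ∈ Finset.Ioc i h, (j:ℝ) = h*(h+1)/2 - i*(i+1)/2 := by
    intro i hi
    rw [hIoc i hi, Finset.sum_sdiff_eq_sub
      (by intro x hx; simp only [Finset.mem_Icc] at *; omega), gauss, gauss]
  have sum_Ioc_const : ∀ i, i ≤ h → ∑ _j ∈ Finset.Ioc i h, (1:ℝ) = (h:ℝ) - i := by
    intro i hi
    rw [Finset.sum_const, Nat.card_Ioc, nsmul_eq_mul, mul_one, Nat.cast_sub hi]
  have hIco : ∀ j, 1 ≤ j → Finset.Ico 1 j = Finset.Icc 1 (j-1) := by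
    intro j hj; ext i; simp only [Finset.mem_Ico, Finset.mem_Icc]; omega
  have sum_Ico_id : ∀ j : ℕ, 1 ≤ j → ∑ i ∈ Finset.Ico 1 j, (i:ℝ) = ((j:ℝ)-1)*(j:ℝ)/2 := by
    intro j hj
    rw [hIco j hj, gauss, Nat.cast_sub hj, Nat.cast_one]; ring
  have sum_Ico_const : ∀ j : ℕ, 1 ≤ j → ∑ _i ∈ Finset.Ico 1 j, (1:ℝ) = (j:ℝ) - 1 := by
    intro j hj
    rw [Finset.sum_const, Nat.card_Ico, nsmul_eq_mul, mul_one, Nat.cast_sub hj, Nat.cast_one]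
  -- linear inner sums
  have lin1 : ∀ i, i ≤ h → ∑ j ∈ Finset.Ioc i h, (2*(j:ℝ) - 2*i - h) = ((i:ℝ)-1)*((i:ℝ)-h) := by
    intro i hi
    have e : ∑ j ∈ Finset.Ioc i h, (2*(j:ℝ) - 2*i - h)
        = 2*(∑ j ∈ Finset.Ioc i h, (j:ℝ)) - (2*(i:ℝ)+h) * (∑ _j ∈ Finset.Ioc i h, (1:ℝ)) := by
      rw [Finset.mul_sum, Finset.mul_sum, ← Finset.sum_sub_distrib]
      exact Finset.sum_congr rfl fun j _ => by ring
    rw [e, sum_Ioc_id i hi, sum_Ioc_const i hi]; ring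
  have lin2 : ∀ j : ℕ, 1 ≤ j → ∑ i ∈ Finset.Ico 1 j, (2*(j:ℝ) - 2*i - h) = ((j:ℝ)-1)*((j:ℝ)-h) := by
    intro j hj
    have e : ∑ i ∈ Finset.Ico 1 j, (2*(j:ℝ) - 2*i - h)
        = (2*(j:ℝ)-h) * (∑ _i ∈ Finset.Ico 1 j, (1:ℝ)) - 2*(∑ i ∈ Finset.Ico 1 j, (i:ℝ)) := by
      rw [Finset.mul_sum, Finset.mul_sum, ← Finset.sum_sub_distrib]
      exact Finset.sum_congr rfl fun i _ => by ring
    rw [e, sum_Ico_id j hj, sum_Ico_const j hj]; ring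
  -- the four double-sum evaluations
  have D1 : ∑ i ∈ I, ∑ j ∈ I, (if i < j then (1:ℝ) else 0) = ((h:ℝ)^2 - h)/2 := by
    have e : ∀ i ∈ I, ∑ j ∈ I, (if i < j then (1:ℝ) else 0) = (h:ℝ) - i := by
      intro i hi; rw [ite_gt]; exact sum_Ioc_const i (hmem i hi).2
    rw [Finset.sum_congr rfl e, Finset.sum_sub_distrib, Finset.sum_const, hcardI,
      nsmul_eq_mul]
    rw [hI, gauss]; ring
  set S : ℝ := ∑ i ∈ I, s i with hSdef
  have D2 : ∑ i ∈ I, ∑ j ∈ I, (if i < j then s i * s j else 0) = (S*S - h)/2 := by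
    have hsq : S * S = ∑ i ∈ I, ∑ j ∈ I, s i * s j := Finset.sum_mul_sum I I s s
    have tri : ∀ i ∈ I, ∀ j ∈ I, s i * s j
        = (if i < j then s i * s j else 0) + (if i = j then s i * s j else 0)
          + (if j < i then s i * s j else 0) := by
      intro i _ j _
      rcases lt_trichotomy i j with hc | hc | hc <;>
        split_ifs <;> (try ring) <;> (exfalso; omega)
    have diag : ∑ i ∈ I, ∑ j ∈ I, (if i = j then s i * s j else 0) = (h:ℝ) := by
      have e : ∀ i ∈ I, ∑ j ∈ I, (if i = j then s i * s j else 0) = 1 := by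
        intro i hi
        rw [Finset.sum_ite_eq I i (fun j => s i * s j), if_pos hi]
        exact hs2 i hi
      rw [Finset.sum_congr rfl e, Finset.sum_const, hcardI, nsmul_eq_mul, mul_one]
    have swap : ∑ i ∈ I, ∑ j ∈ I, (if j < i then s i * s j else 0)
        = ∑ i ∈ I, ∑ j ∈ I, (if i < j then s i * s j else 0) := by
      rw [Finset.sum_comm]
      exact Finset.sum_congr rfl fun a _ => Finset.sum_congr rfl fun b _ => by rw [mul_comm]
    have expand0 : ∑ i ∈ I, ∑ j ∈ I, s i * s j
        = (∑ i ∈ I, ∑ j ∈ I, (if i < j then s i * s j else 0))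
          + (∑ i ∈ I, ∑ j ∈ I, (if i = j then s i * s j else 0))
          + (∑ i ∈ I, ∑ j ∈ I, (if j < i then s i * s j else 0)) := by
      rw [← Finset.sum_add_distrib, ← Finset.sum_add_distrib]
      refine Finset.sum_congr rfl fun i hi => ?_
      rw [← Finset.sum_add_distrib, ← Finset.sum_add_distrib]
      exact Finset.sum_congr rfl fun j hj => tri i hi j hj
    have e := hsq
    rw [expand0, diag, swap] at e
    linarith [e]
  have D3a : ∑ i ∈ I, ∑ j ∈ I, (if i < j then (2*(j:ℝ)-2*(i:ℝ)-h) * s i else 0)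
      = ∑ i ∈ I, s i * (((i:ℝ)-1)*((i:ℝ)-h)) := by
    refine Finset.sum_congr rfl fun i hi => ?_
    have e : ∀ j : ℕ, (if i < j then (2*(j:ℝ)-2*(i:ℝ)-h) * s i else 0)
        = (if i < j then (2*(j:ℝ)-2*(i:ℝ)-h) else 0) * s i := by
      intro j; split_ifs <;> ring
    rw [Finset.sum_congr rfl fun j _ => e j, ← Finset.sum_mul, ite_gt,
      lin1 i (hmem i hi).2, mul_comm]
  have D3b : ∑ i ∈ I, ∑ j ∈ I, (if i < j then (2*(j:ℝ)-2*(i:ℝ)-h) * s j else 0)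
      = ∑ j ∈ I, s j * (((j:ℝ)-1)*((j:ℝ)-h)) := by
    rw [Finset.sum_comm]
    refine Finset.sum_congr rfl fun j hj => ?_
    have e : ∀ i : ℕ, (if i < j then (2*(j:ℝ)-2*(i:ℝ)-h) * s j else 0)
        = (if i < j then (2*(j:ℝ)-2*(i:ℝ)-h) else 0) * s j := by
      intro i; split_ifs <;> ring
    rw [Finset.sum_congr rfl fun i _ => e i, ← Finset.sum_mul, ite_lt _ j hj,
      lin2 j (hmem j hj).1, mul_comm]
  -- pointwise key identities
  have key : ∀ i ∈ I, ∀ j ∈ I,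
      ((if i < j ∧ δ j < δ i then ((j:ℝ) - (i:ℝ)) else 0)
        + (if i < j ∧ δ i < δ j then ((h:ℝ) + (i:ℝ) - (j:ℝ)) else 0))
      = (if i < j then ((h:ℝ) - (h:ℝ)*(s i * s j)
          + (2*(j:ℝ)-2*(i:ℝ)-(h:ℝ))*(s i - s j))/4 else 0) := by
    intro i hi j hj
    simp only [hsdef]
    rcases hδ' i hi with h1 | h1 <;> rcases hδ' j hj with h2 | h2 <;>
      by_cases hij : i < j <;>
      simp only [h1, h2, hij, true_and, false_and, if_false, if_true,
        and_true, and_false] <;>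
      norm_num <;> ring
  have key2 : ∀ i ∈ I, ∀ j ∈ I,
      ((if i < j ∧ δ j < δ i then (1:ℝ) else 0)
        + (if i < j ∧ δ i < δ j then (1:ℝ) else 0))
      = (if i < j then (1 - s i * s j)/2 else 0) := by
    intro i hi j hj
    simp only [hsdef]
    rcases hδ' i hi with h1 | h1 <;> rcases hδ' j hj with h2 | h2 <;>
      by_cases hij : i < j <;>
      simp only [h1, h2, hij, true_and, false_and, if_false, if_true,
        and_true, and_false] <;>
      norm_num <;> ring
  -- abbreviations for the filtered sets
  set A : Finset (ℕ × ℕ) := (I ×ˢ I).filter (fun p => p.1 < p.2 ∧ δ p.2 < δ p.1) with hA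
  set B : Finset (ℕ × ℕ) := (I ×ˢ I).filter (fun p => p.1 < p.2 ∧ δ p.1 < δ p.2) with hB
  have hTA : ∑ p ∈ A, ((p.2:ℝ) - (p.1:ℝ))
      = ∑ i ∈ I, ∑ j ∈ I, (if i < j ∧ δ j < δ i then ((j:ℝ) - (i:ℝ)) else 0) := by
    rw [hA, Finset.sum_filter, Finset.sum_product]
  have hTB : ∑ p ∈ B, ((h:ℝ) + (p.1:ℝ) - (p.2:ℝ))
      = ∑ i ∈ I, ∑ j ∈ I, (if i < j ∧ δ i < δ j then ((h:ℝ) + (i:ℝ) - (j:ℝ)) else 0) := by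
    rw [hB, Finset.sum_filter, Finset.sum_product]
  have hCA : (A.card : ℝ) = ∑ i ∈ I, ∑ j ∈ I, (if i < j ∧ δ j < δ i then (1:ℝ) else 0) := by
    rw [hA, Finset.card_eq_sum_ones]
    push_cast
    rw [Finset.sum_filter, Finset.sum_product]
  have hCB : (B.card : ℝ) = ∑ i ∈ I, ∑ j ∈ I, (if i < j ∧ δ i < δ j then (1:ℝ) else 0) := by
    rw [hB, Finset.card_eq_sum_ones]
    push_cast
    rw [Finset.sum_filter, Finset.sum_product]
  -- combine the two sums
  have sumAB : ∑ p ∈ A, ((p.2:ℝ) - (p.1:ℝ)) + ∑ p ∈ B, ((h:ℝ) + (p.1:ℝ) - (p.2:ℝ))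
      = ((h:ℝ)*(((h:ℝ)^2 - h)/2) - (h:ℝ)*((S*S - h)/2))/4 := by
    rw [hTA, hTB, ← Finset.sum_add_distrib]
    have step1 : ∀ i ∈ I, ∑ j ∈ I, (if i < j ∧ δ j < δ i then ((j:ℝ) - (i:ℝ)) else 0)
        + ∑ j ∈ I, (if i < j ∧ δ i < δ j then ((h:ℝ) + (i:ℝ) - (j:ℝ)) else 0)
        = ∑ j ∈ I, (if i < j then ((h:ℝ) - (h:ℝ)*(s i * s j)
            + (2*(j:ℝ)-2*(i:ℝ)-(h:ℝ))*(s i - s j))/4 else 0) := by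
      intro i hi
      rw [← Finset.sum_add_distrib]
      exact Finset.sum_congr rfl fun j hj => key i hi j hj
    rw [Finset.sum_congr rfl step1]
    have split : ∀ i j : ℕ, (if i < j then ((h:ℝ) - (h:ℝ)*(s i * s j)
          + (2*(j:ℝ)-2*(i:ℝ)-(h:ℝ))*(s i - s j))/4 else 0)
        = ((h:ℝ) * (if i < j then (1:ℝ) else 0) - (h:ℝ) * (if i < j then s i * s j else 0)
          + ((if i < j then (2*(j:ℝ)-2*(i:ℝ)-(h:ℝ)) * s i else 0)
            - (if i < j then (2*(j:ℝ)-2*(i:ℝ)-(h:ℝ)) * s j else 0)))/4 := by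
      intro i j; split_ifs <;> ring
    calc ∑ i ∈ I, ∑ j ∈ I, (if i < j then ((h:ℝ) - (h:ℝ)*(s i * s j)
          + (2*(j:ℝ)-2*(i:ℝ)-(h:ℝ))*(s i - s j))/4 else 0)
        = ((h:ℝ) * (∑ i ∈ I, ∑ j ∈ I, (if i < j then (1:ℝ) else 0))
          - (h:ℝ) * (∑ i ∈ I, ∑ j ∈ I, (if i < j then s i * s j else 0))
          + ((∑ i ∈ I, ∑ j ∈ I, (if i < j then (2*(j:ℝ)-2*(i:ℝ)-(h:ℝ)) * s i else 0))
            - (∑ i ∈ I, ∑ j ∈ I, (if i < j then (2*(j:ℝ)-2*(i:ℝ)-(h:ℝ)) * s j else 0))))/4 := by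
          simp_rw [split, ← Finset.sum_div, Finset.sum_add_distrib, Finset.sum_sub_distrib,
            ← Finset.mul_sum]
      _ = ((h:ℝ)*(((h:ℝ)^2 - h)/2) - (h:ℝ)*((S*S - h)/2))/4 := by
          rw [D1, D2, D3a, D3b]; ring
  have cardAB : (A.card : ℝ) + (B.card : ℝ) = (((h:ℝ)^2 - h)/2 - (S*S - h)/2)/2 := by
    rw [hCA, hCB, ← Finset.sum_add_distrib]
    have step1 : ∀ i ∈ I, ∑ j ∈ I, (if i < j ∧ δ j < δ i then (1:ℝ) else 0)
        + ∑ j ∈ I, (if i < j ∧ δ i < δ j then (1:ℝ) else 0)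
        = ∑ j ∈ I, (if i < j then (1 - s i * s j)/2 else 0) := by
      intro i hi
      rw [← Finset.sum_add_distrib]
      exact Finset.sum_congr rfl fun j hj => key2 i hi j hj
    rw [Finset.sum_congr rfl step1]
    have split : ∀ i j : ℕ, (if i < j then (1 - s i * s j)/2 else 0)
        = ((if i < j then (1:ℝ) else 0) - (if i < j then s i * s j else 0))/2 := by
      intro i j; split_ifs <;> ring
    simp_rw [split, ← Finset.sum_div, Finset.sum_sub_distrib]
    rw [D1, D2]
  -- arithmetic facts about a₁, a₂
  have hfneg : I.filter (fun i => ¬ δ i = 1) = I.filter (fun i => δ i = -1) := by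
    apply Finset.filter_congr
    intro i hi; rcases hδ' i hi with e | e <;> simp [e]
  have hha : (h:ℝ) = (a₁:ℝ) + (a₂:ℝ) := by
    have e : a₁ + a₂ = h := by
      rw [ha₁, ha₂, ← hfneg,
        Finset.card_filter_add_card_filter_not (p := fun i => δ i = 1)]
      exact hcardI
    exact_mod_cast (by omega : h = a₁ + a₂)
  have hSa : S = (a₁:ℝ) - (a₂:ℝ) := by
    rw [hSdef, ← Finset.sum_filter_add_sum_filter_not I (fun i => δ i = 1) s]
    have e1 : ∑ i ∈ I.filter (fun i => δ i = 1), s i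
        = ((I.filter (fun i => δ i = 1)).card : ℝ) := by
      rw [Finset.sum_congr rfl (fun i hi => show s i = 1 by
        simp [hsdef, (Finset.mem_filter.mp hi).2])]
      simp
    have e2 : ∑ i ∈ I.filter (fun i => ¬ δ i = 1), s i
        = -((I.filter (fun i => ¬ δ i = 1)).card : ℝ) := by
      rw [Finset.sum_congr rfl (fun i hi => show s i = -1 by
        have hm := Finset.mem_filter.mp hi
        rcases hδ' i hm.1 with e | e
        · exact absurd e hm.2
        · simp [hsdef, e])]
      simp
    rw [e1, e2, hfneg, ha₁, ha₂]
    push_cast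
    ring
  -- Part 1
  have part1 : (h : ℝ) + (∑ p ∈ A, ((p.2:ℝ) - (p.1:ℝ)))
      + (∑ p ∈ B, ((h:ℝ) + (p.1:ℝ) - (p.2:ℝ))) = (h:ℝ) * (1 + (a₁:ℝ) * (a₂:ℝ) / 2) := by
    rw [add_assoc, sumAB, hSa, hha]; ring
  -- Part 3
  have part3 : 1 + A.card + B.card = 1 + a₁ * a₂ := by
    have : (A.card : ℝ) + (B.card : ℝ) = ((a₁ * a₂ : ℕ) : ℝ) := by
      rw [cardAB, hSa, hha]; push_cast; ring
    have h' : A.card + B.card = a₁ * a₂ := by exact_mod_cast this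
    omega
  -- Part 2
  have part2 : ((h : ℝ) / (2 * h) - 1 / 4) +
      (∑ p ∈ A, (((p.2:ℝ) - (p.1:ℝ)) / (2 * h) - 1 / 4)) +
      (∑ p ∈ B, (((h:ℝ) + (p.1:ℝ) - (p.2:ℝ)) / (2 * h) - 1 / 4)) = 1 / 4 := by
    have hne : (0:ℝ) < (h:ℝ) := by exact_mod_cast hh
    have eA : ∑ p ∈ A, (((p.2:ℝ) - (p.1:ℝ)) / (2 * h) - 1 / 4)
        = (∑ p ∈ A, ((p.2:ℝ) - (p.1:ℝ))) / (2 * h) - (A.card : ℝ) / 4 := by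
      rw [Finset.sum_sub_distrib, Finset.sum_const, Finset.sum_div, nsmul_eq_mul]
      ring
    have eB : ∑ p ∈ B, (((h:ℝ) + (p.1:ℝ) - (p.2:ℝ)) / (2 * h) - 1 / 4)
        = (∑ p ∈ B, ((h:ℝ) + (p.1:ℝ) - (p.2:ℝ))) / (2 * h) - (B.card : ℝ) / 4 := by
      rw [Finset.sum_sub_distrib, Finset.sum_const, Finset.sum_div, nsmul_eq_mul]
      ring
    have hcard' : (A.card : ℝ) + (B.card : ℝ) = (a₁:ℝ) * (a₂:ℝ) := by
      rw [cardAB, hSa, hha]; ring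
    rw [eA, eB]
    have hX : (∑ p ∈ A, ((p.2:ℝ) - (p.1:ℝ))) + (∑ p ∈ B, ((h:ℝ) + (p.1:ℝ) - (p.2:ℝ)))
        = (h:ℝ) * ((a₁:ℝ)*(a₂:ℝ)) / 2 := by
      rw [sumAB, hSa, hha]; ring
    have e0 : (h:ℝ)/(2*h) = 1/2 := by
      rw [div_eq_iff (by positivity : (2*(h:ℝ)) ≠ 0)]; ring
    have e1 : (∑ p ∈ A, ((p.2:ℝ) - (p.1:ℝ)))/(2*(h:ℝ))
        + (∑ p ∈ B, ((h:ℝ) + (p.1:ℝ) - (p.2:ℝ)))/(2*(h:ℝ)) = (a₁:ℝ)*(a₂:ℝ)/4 := by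
      rw [← add_div, hX]
      rw [div_eq_div_iff (by positivity : (2*(h:ℝ)) ≠ 0) (by norm_num : (4:ℝ) ≠ 0)]
      ring
    linarith [hcard', e0, e1]
  exact ⟨part1, part2, part3⟩
end
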